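/- Define the LCFS-PR conditional average AoI formula via the general AoI identity: if M ~ Geo(ξ) and N ~ Geo(μ) are independent with 0 < ξ < μ < 1, then (1/2)·E[M²]/E[M] + E[min(N,M)]/P(N ≤ M) − 1/2 = 1/ξ + 1/μ − 1. -/

import Mathlib

set_option maxHeartbeats 1000000

open Finset

/-- `∑ (n+1) r^n = 1/(1-r)^2`. -/
lemma aux_hasSum_linear {r : ℝ} (hr : |r| < 1) :
    HasSum (fun n : ℕ => ((n : ℝ) + 1) * r ^ n) (1 / (1 - r) ^ 2) := by
  have h := hasSum_choose_mul_geometric_of_norm_lt_one 1 (r := r) (by rw [Real.norm_eq_abs]; exact hr)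
  convert h using 1
  · rfl
  funext n; simp [Nat.choose_one_right]

/-- `∑ (n+1)^2 r^n = (1+r)/(1-r)^3`. -/
lemma aux_hasSum_sq {r : ℝ} (hr : |r| < 1) :
    HasSum (fun n : ℕ => ((n : ℝ) + 1) ^ 2 * r ^ n) ((1 + r) / (1 - r) ^ 3) := by
  have h2 := hasSum_choose_mul_geometric_of_norm_lt_one 2 (r := r) (by rw [Real.norm_eq_abs]; exact hr)
  have h := (h2.mul_left 2).sub (aux_hasSum_linear hr)
  have hr1 : (1 : ℝ) - r ≠ 0 := by
    intro h0; rw [sub_eq_zero] at h0; rw [← h0] at hr; simp at hr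
  convert h using 1
  · rfl
  · funext n
    have : ((n + 2).choose 2 : ℝ) = ((n : ℝ) + 1) * ((n : ℝ) + 2) / 2 := by
      rw [Nat.cast_choose_two]; push_cast; ring
    rw [this]; ring
  · field_simp; ring

theorem stmt_6 (ξ μ : ℝ) (hξ : 0 < ξ) (hξμ : ξ < μ) (hμ : μ < 1) :
    (1 / 2) * (∑' m : ℕ, ((m : ℝ) + 1) ^ 2 * (ξ * (1 - ξ) ^ m))
        / (∑' m : ℕ, ((m : ℝ) + 1) * (ξ * (1 - ξ) ^ m))
      + (∑' q : ℕ × ℕ, ((min (q.1 + 1) (q.2 + 1) : ℝ)) *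
          ((ξ * (1 - ξ) ^ q.1) * (μ * (1 - μ) ^ q.2)))
        / (∑' q : ℕ × ℕ, (if q.2 ≤ q.1 then
            (ξ * (1 - ξ) ^ q.1) * (μ * (1 - μ) ^ q.2) else 0))
      - 1 / 2
    = 1 / ξ + 1 / μ - 1 := by
  have hμ0 : 0 < μ := hξ.trans hξμ
  have hξ1 : ξ < 1 := hξμ.trans hμ
  have hr : |1 - ξ| < 1 := abs_lt.2 ⟨by linarith, by linarith⟩
  have ht : |1 - μ| < 1 := abs_lt.2 ⟨by linarith, by linarith⟩
  have hs : |(1 - ξ) * (1 - μ)| < 1 := abs_lt.2 ⟨by nlinarith, by nlinarith⟩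
  have hK : 0 < ξ + μ - ξ * μ := by nlinarith
  have hξne : ξ ≠ 0 := ne_of_gt hξ
  have hμne : μ ≠ 0 := ne_of_gt hμ0
  have hKne : ξ + μ - ξ * μ ≠ 0 := ne_of_gt hK
  have hr0 : (0 : ℝ) ≤ 1 - ξ := by linarith
  have ht0 : (0 : ℝ) ≤ 1 - μ := by linarith
  have hPnn : ∀ q : ℕ × ℕ, 0 ≤ (ξ * (1 - ξ) ^ q.1) * (μ * (1 - μ) ^ q.2) := fun q =>
    mul_nonneg (mul_nonneg hξ.le (pow_nonneg hr0 _)) (mul_nonneg hμ0.le (pow_nonneg ht0 _))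
  have hBnn : ∀ m : ℕ, 0 ≤ ((m : ℝ) + 1) * (ξ * (1 - ξ) ^ m) := fun m =>
    mul_nonneg (by positivity) (mul_nonneg hξ.le (pow_nonneg hr0 _))
  have hGnn : ∀ n : ℕ, 0 ≤ μ * (1 - μ) ^ n := fun n =>
    mul_nonneg hμ0.le (pow_nonneg ht0 _)
  have hrn : ‖1 - ξ‖ < 1 := by rw [Real.norm_eq_abs]; exact hr
  have htn : ‖1 - μ‖ < 1 := by rw [Real.norm_eq_abs]; exact ht
  have hsn : ‖(1 - ξ) * (1 - μ)‖ < 1 := by rw [Real.norm_eq_abs]; exact hs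
  -- first two tsums
  have hA : HasSum (fun m : ℕ => ((m : ℝ) + 1) ^ 2 * (ξ * (1 - ξ) ^ m)) ((2 - ξ) / ξ ^ 2) := by
    have h := (aux_hasSum_sq hr).mul_left ξ
    convert h using 1
    · rfl
    · funext m; ring
    · rw [show (1 : ℝ) - (1 - ξ) = ξ by ring]; field_simp; ring
  have hB : HasSum (fun m : ℕ => ((m : ℝ) + 1) * (ξ * (1 - ξ) ^ m)) (1 / ξ) := by
    have h := (aux_hasSum_linear hr).mul_left ξ
    convert h using 1
    · rfl
    · funext m; ring
    · rw [show (1 : ℝ) - (1 - ξ) = ξ by ring]; field_simp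
  -- basic geometric sums
  have hGμ : HasSum (fun n : ℕ => μ * (1 - μ) ^ n) 1 := by
    have h := (hasSum_geometric_of_norm_lt_one htn).mul_left μ
    convert h using 1
    · rfl
    rw [show (1 : ℝ) - (1 - μ) = μ by ring]; field_simp
  -- fiber sums for the min expectation
  have hmin : ∀ m : ℕ, HasSum
      (fun n : ℕ => ((min (m + 1) (n + 1) : ℕ) : ℝ) * (μ * (1 - μ) ^ n))
      ((1 - (1 - μ) ^ (m + 1)) / μ) := by
    intro m
    induction m with
    | zero =>
      convert hGμ using 1
      · funext n
        rw [show min (0 + 1) (n + 1) = 1 by omega]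
        push_cast; ring
      · rw [pow_one]; field_simp; ring
    | succ m ih =>
      have tail : HasSum (fun n : ℕ => if m + 1 ≤ n then μ * (1 - μ) ^ n else 0)
          ((1 - μ) ^ (m + 1)) := by
        have h' : HasSum (fun n : ℕ =>
            (fun k : ℕ => if m + 1 ≤ k then μ * (1 - μ) ^ k else 0) (n + (m + 1)))
            ((1 - μ) ^ (m + 1)) := by
          have h := (hasSum_geometric_of_norm_lt_one htn).mul_left (μ * (1 - μ) ^ (m + 1))
          have hval : μ * (1 - μ) ^ (m + 1) * (1 - (1 - μ))⁻¹ = (1 - μ) ^ (m + 1) := by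
            rw [show (1 : ℝ) - (1 - μ) = μ by ring]; field_simp
          rw [hval] at h
          have hfun : (fun n : ℕ =>
              (fun k : ℕ => if m + 1 ≤ k then μ * (1 - μ) ^ k else 0) (n + (m + 1)))
              = fun n : ℕ => μ * (1 - μ) ^ (m + 1) * (1 - μ) ^ n := by
            funext n
            show (if m + 1 ≤ n + (m + 1) then μ * (1 - μ) ^ (n + (m + 1)) else 0)
              = μ * (1 - μ) ^ (m + 1) * (1 - μ) ^ n
            rw [if_pos (by omega), pow_add]
            ring
          rw [hfun]
          exact h
        have h2 := (hasSum_nat_add_iff (f := fun k : ℕ => if m + 1 ≤ k then μ * (1 - μ) ^ k else 0) (m + 1)).1 h'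
        have hz : ∑ k ∈ Finset.range (m + 1),
            (if m + 1 ≤ k then μ * (1 - μ) ^ k else 0) = 0 := by
          apply Finset.sum_eq_zero
          intro k hk
          simp only [Finset.mem_range] at hk
          rw [if_neg (by omega)]
        rw [hz, add_zero] at h2
        exact h2
      have h := ih.add tail
      convert h using 1
      · funext n
        by_cases hn : m + 1 ≤ n
        · rw [if_pos hn, show min (m + 1 + 1) (n + 1) = m + 2 by omega,
            show min (m + 1) (n + 1) = m + 1 by omega]
          push_cast; ring
        · rw [if_neg hn, show min (m + 1 + 1) (n + 1) = n + 1 by omega,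
            show min (m + 1) (n + 1) = n + 1 by omega]
          ring
      · field_simp; ring
  -- the min double sum
  set F : ℕ × ℕ → ℝ := fun q =>
    ((min (q.1 + 1) (q.2 + 1) : ℝ)) * ((ξ * (1 - ξ) ^ q.1) * (μ * (1 - μ) ^ q.2)) with hFdef
  have hFfib : ∀ m : ℕ, HasSum (fun n : ℕ => F (m, n))
      (ξ * (1 - ξ) ^ m * ((1 - (1 - μ) ^ (m + 1)) / μ)) := by
    intro m
    have h := (hmin m).mul_left (ξ * (1 - ξ) ^ m)
    convert h using 1
    · rfl
    funext n
    simp only [hFdef]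
    push_cast
    ring
  have hFsumm : Summable F := by
    have hbig : Summable (fun q : ℕ × ℕ =>
        (((q.1 : ℝ) + 1) * (ξ * (1 - ξ) ^ q.1)) * (μ * (1 - μ) ^ q.2)) := by
      exact Summable.mul_of_nonneg hB.summable hGμ.summable hBnn hGnn
    apply Summable.of_nonneg_of_le _ _ hbig
    · intro q
      simp only [hFdef]
      have h0 : (0 : ℝ) ≤ (min ((q.1 : ℝ) + 1) ((q.2 : ℝ) + 1)) :=
        le_min (by positivity) (by positivity)
      exact mul_nonneg h0 (hPnn q)
    · intro q
      simp only [hFdef]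
      have h1 : (min ((q.1 : ℝ) + 1) ((q.2 : ℝ) + 1)) ≤ (q.1 : ℝ) + 1 := min_le_left _ _
      have h2 : (0 : ℝ) ≤ (ξ * (1 - ξ) ^ q.1) * (μ * (1 - μ) ^ q.2) := hPnn q
      calc (min ((q.1 : ℝ) + 1) ((q.2 : ℝ) + 1)) * ((ξ * (1 - ξ) ^ q.1) * (μ * (1 - μ) ^ q.2))
          ≤ ((q.1 : ℝ) + 1) * ((ξ * (1 - ξ) ^ q.1) * (μ * (1 - μ) ^ q.2)) :=
            mul_le_mul_of_nonneg_right h1 h2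
        _ = (((q.1 : ℝ) + 1) * (ξ * (1 - ξ) ^ q.1)) * (μ * (1 - μ) ^ q.2) := by ring
  have hFouter : HasSum (fun m : ℕ => ξ * (1 - ξ) ^ m * ((1 - (1 - μ) ^ (m + 1)) / μ))
      (1 / (ξ + μ - ξ * μ)) := by
    have h1 := (hasSum_geometric_of_norm_lt_one hrn).mul_left (ξ / μ)
    have h2 := (hasSum_geometric_of_norm_lt_one hsn).mul_left (ξ * (1 - μ) / μ)
    have h := h1.sub h2
    convert h using 1
    · rfl
    · funext m
      rw [mul_pow]
      field_simp
      ring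
    · rw [show (1 : ℝ) - (1 - ξ) = ξ by ring,
        show (1 : ℝ) - (1 - ξ) * (1 - μ) = ξ + μ - ξ * μ by ring]
      field_simp
      ring
  have hC : (∑' q : ℕ × ℕ, F q) = 1 / (ξ + μ - ξ * μ) :=
    (hFsumm.hasSum.prod_fiberwise hFfib).unique hFouter
  -- the indicator double sum
  set E : ℕ × ℕ → ℝ := fun q =>
    if q.2 ≤ q.1 then (ξ * (1 - ξ) ^ q.1) * (μ * (1 - μ) ^ q.2) else 0 with hEdef
  have hEfib : ∀ m : ℕ, HasSum (fun n : ℕ => E (m, n))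
      (ξ * (1 - ξ) ^ m * (1 - (1 - μ) ^ (m + 1))) := by
    intro m
    have h := hasSum_sum_of_ne_finset_zero (L := SummationFilter.unconditional ℕ) (s := Finset.range (m + 1))
      (f := fun n : ℕ => E (m, n)) (by
        intro n hn
        simp only [Finset.mem_range] at hn
        simp only [hEdef]
        rw [if_neg (by omega)])
    convert h using 1
    have hsum : ∑ n ∈ Finset.range (m + 1), E (m, n)
        = (ξ * (1 - ξ) ^ m) * μ * ∑ n ∈ Finset.range (m + 1), (1 - μ) ^ n := by
      rw [Finset.mul_sum]
      apply Finset.sum_congr rfl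
      intro n hn
      simp only [Finset.mem_range] at hn
      simp only [hEdef]
      rw [if_pos (by omega)]
      ring
    have hne : ((1 : ℝ) - μ) - 1 ≠ 0 := by intro h1; apply hμne; linarith
    rw [hsum, geom_sum_eq (by intro h1; rw [sub_eq_iff_eq_add] at h1; linarith) (m + 1),
      ← mul_div_assoc, eq_div_iff hne]
    ring
  have hEsumm : Summable E := by
    have hbig : Summable (fun q : ℕ × ℕ => (ξ * (1 - ξ) ^ q.1) * (μ * (1 - μ) ^ q.2)) := by
      exact Summable.mul_of_nonneg
        ((summable_geometric_of_norm_lt_one hrn).mul_left ξ)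
        ((summable_geometric_of_norm_lt_one htn).mul_left μ)
        (fun m => mul_nonneg hξ.le (pow_nonneg hr0 _))
        (fun n => mul_nonneg hμ0.le (pow_nonneg ht0 _))
    apply Summable.of_nonneg_of_le _ _ hbig
    · intro q
      simp only [hEdef]
      split_ifs
      · exact hPnn q
      · exact le_rfl
    · intro q
      simp only [hEdef]
      split_ifs
      · exact le_rfl
      · exact hPnn q
  have hEouter : HasSum (fun m : ℕ => ξ * (1 - ξ) ^ m * (1 - (1 - μ) ^ (m + 1)))
      (μ / (ξ + μ - ξ * μ)) := by
    have h1 := (hasSum_geometric_of_norm_lt_one hrn).mul_left ξ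
    have h2 := (hasSum_geometric_of_norm_lt_one hsn).mul_left (ξ * (1 - μ))
    have h := h1.sub h2
    convert h using 1
    · rfl
    · funext m
      rw [mul_pow]
      ring
    · rw [show (1 : ℝ) - (1 - ξ) = ξ by ring,
        show (1 : ℝ) - (1 - ξ) * (1 - μ) = ξ + μ - ξ * μ by ring]
      field_simp
      have hK2 : μ - μ * ξ + ξ ≠ 0 := by intro h0; apply hKne; linarith
      linear_combination mul_inv_cancel₀ hK2
  have hD : (∑' q : ℕ × ℕ, E q) = μ / (ξ + μ - ξ * μ) :=
    (hEsumm.hasSum.prod_fiberwise hEfib).unique hEouter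
  rw [hA.tsum_eq, hB.tsum_eq, hC, hD]
  field_simp
  ring
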